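/- Let (C^•, ∂) be a finite-dimensional acyclic cochain complex and let a : C^• → C^{•+1} be a degree +1 linear map satisfying the anticommutation relation ∂∘a + a∘∂ = 0. If k and k′ are two cochain contractions (i.e. ∂k + k∂ = id and ∂k′ + k′∂ = id), then str(a∘k) = str(a∘k′), where str denotes the super trace on the graded space C^•. -/

import Mathlib

set_option maxHeartbeats 1000000

/-!
STATEMENT 3.  `(C^•, d)` is a finite-dimensional acyclic cochain complex of
length `n` over a field of characteristic zero, `a` is a degree `+1` map with
`∂a + a∂ = 0`, and `k`, `k'` are two cochain contractions (`∂k + k∂ = id`,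
with the degree-0 convention `k∘∂ = id` on `C^0`).  Then the super traces of
`a∘k` and `a∘k'` agree.  Here `a∘k` acts on `C^{j+1}` as `a j ∘ k j`, and
`str(a∘k) = Σ_{j=0}^{n-1} (-1)^{j+1} tr(a j ∘ k j)` (the degree-0 piece of
`a∘k` vanishes since `k` lowers `C^0` to `C^{-1} = 0`). -/
theorem stmt3 (K : Type*) [Field K] [CharZero K] (n : ℕ) (C : ℕ → Type*)
    [∀ j, AddCommGroup (C j)] [∀ j, Module K (C j)]
    [∀ j, FiniteDimensional K (C j)]
    (htop : ∀ j, n < j → ∀ x : C j, x = 0)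
    (d : ∀ j, C j →ₗ[K] C (j + 1))
    (hdd : ∀ j, (d (j + 1)) ∘ₗ (d j) = 0)
    (h0 : LinearMap.ker (d 0) = ⊥)
    (hexact : ∀ j, LinearMap.ker (d (j + 1)) = LinearMap.range (d j))
    (a : ∀ j, C j →ₗ[K] C (j + 1))
    (hanti : ∀ j, (d (j + 1)) ∘ₗ (a j) + (a (j + 1)) ∘ₗ (d j) = 0)
    (k k' : ∀ j, C (j + 1) →ₗ[K] C j)
    (hk0 : (k 0) ∘ₗ (d 0) = LinearMap.id)
    (hk : ∀ j, (d j) ∘ₗ (k j) + (k (j + 1)) ∘ₗ (d (j + 1)) = LinearMap.id)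
    (hk'0 : (k' 0) ∘ₗ (d 0) = LinearMap.id)
    (hk' : ∀ j, (d j) ∘ₗ (k' j) + (k' (j + 1)) ∘ₗ (d (j + 1)) = LinearMap.id) :
    ∑ j ∈ Finset.range n,
        (-1 : K) ^ (j + 1) * LinearMap.trace K (C (j + 1)) ((a j) ∘ₗ (k j)) =
      ∑ j ∈ Finset.range n,
        (-1 : K) ^ (j + 1) * LinearMap.trace K (C (j + 1)) ((a j) ∘ₗ (k' j)) := by
  classical
  -- the auxiliary trace v j = tr((a j ∘ k j ∘ k' (j+1)) ∘ d (j+1)) on C^{j+1}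
  set v : ℕ → K := fun j =>
    LinearMap.trace K (C (j + 1)) (((a j) ∘ₗ (k j) ∘ₗ (k' (j + 1))) ∘ₗ (d (j + 1))) with hv
  set W : ℕ → K := fun j => match j with
    | 0 => 0
    | i + 1 => (-1 : K) ^ (i + 1) * v i with hWdef
  -- operator identity at degree 0
  have op0 : (a 0) ∘ₗ (k 0) = (a 0) ∘ₗ (k' 0) + ((a 0) ∘ₗ (k 0) ∘ₗ (k' 1)) ∘ₗ (d 1) := by
    ext x
    have h1 : (d 0) ((k' 0) x) + (k' 1) ((d 1) x) = x := by
      have := LinearMap.ext_iff.1 (hk' 0) x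
      simpa [LinearMap.add_apply, LinearMap.comp_apply] using this
    have h2 : ∀ y : C 0, (k 0) ((d 0) y) = y := fun y => by
      have := LinearMap.ext_iff.1 hk0 y
      simpa [LinearMap.comp_apply] using this
    calc (a 0) ((k 0) x) = (a 0) ((k 0) ((d 0) ((k' 0) x) + (k' 1) ((d 1) x))) := by rw [h1]
    _ = (a 0) ((k' 0) x) + (a 0) ((k 0) ((k' 1) ((d 1) x))) := by
        rw [map_add, map_add, h2]
    _ = _ := by simp [LinearMap.comp_apply]
  -- operator identity at degree j+1
  have opS : ∀ j, (a (j + 1)) ∘ₗ (k (j + 1)) =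
      (a (j + 1)) ∘ₗ (k' (j + 1))
        + (d (j + 1)) ∘ₗ ((a j) ∘ₗ (k j) ∘ₗ (k' (j + 1)))
        + ((a (j + 1)) ∘ₗ (k (j + 1)) ∘ₗ (k' (j + 2))) ∘ₗ (d (j + 2)) := by
    intro j
    ext x
    have h1 : (d (j + 1)) ((k' (j + 1)) x) + (k' (j + 2)) ((d (j + 2)) x) = x := by
      have := LinearMap.ext_iff.1 (hk' (j + 1)) x
      simpa [LinearMap.add_apply, LinearMap.comp_apply] using this
    have h2 : ∀ y : C (j + 1), (k (j + 1)) ((d (j + 1)) y) = y - (d j) ((k j) y) := fun y => by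
      have := LinearMap.ext_iff.1 (hk j) y
      simp [LinearMap.add_apply, LinearMap.comp_apply] at this
      linear_combination (norm := module) this
    have h3 : ∀ z : C j, (a (j + 1)) ((d j) z) = - (d (j + 1)) ((a j) z) := fun z => by
      have := LinearMap.ext_iff.1 (hanti j) z
      simp [LinearMap.add_apply, LinearMap.comp_apply] at this
      linear_combination (norm := module) this
    calc (a (j + 1)) ((k (j + 1)) x)
        = (a (j + 1)) ((k (j + 1)) ((d (j + 1)) ((k' (j + 1)) x) + (k' (j + 2)) ((d (j + 2)) x))) := by
          rw [h1]
    _ = (a (j + 1)) ((k' (j + 1)) x - (d j) ((k j) ((k' (j + 1)) x)))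
          + (a (j + 1)) ((k (j + 1)) ((k' (j + 2)) ((d (j + 2)) x))) := by
          rw [map_add, map_add, h2]
    _ = (a (j + 1)) ((k' (j + 1)) x) + (d (j + 1)) ((a j) ((k j) ((k' (j + 1)) x)))
          + (a (j + 1)) ((k (j + 1)) ((k' (j + 2)) ((d (j + 2)) x))) := by
          rw [map_sub, h3]; abel
    _ = _ := by simp [LinearMap.add_apply, LinearMap.comp_apply]
  -- trace identities
  have t0 : LinearMap.trace K (C 1) ((a 0) ∘ₗ (k 0))
      = LinearMap.trace K (C 1) ((a 0) ∘ₗ (k' 0)) + v 0 := by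
    rw [op0, map_add, hv]
  have tS : ∀ j, LinearMap.trace K (C (j + 2)) ((a (j + 1)) ∘ₗ (k (j + 1)))
      = LinearMap.trace K (C (j + 2)) ((a (j + 1)) ∘ₗ (k' (j + 1))) + v j + v (j + 1) := by
    intro j
    rw [opS j, map_add, map_add, hv]
    congr 1
    congr 1
    rw [LinearMap.trace_comp_comm']
  -- per-term telescoping identity
  have key : ∀ j, (-1 : K) ^ (j + 1) * LinearMap.trace K (C (j + 1)) ((a j) ∘ₗ (k j))
      - (-1 : K) ^ (j + 1) * LinearMap.trace K (C (j + 1)) ((a j) ∘ₗ (k' j))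
      = W (j + 1) - W j := by
    intro j
    match j with
    | 0 => simp [hWdef, t0]
    | i + 1 =>
      rw [tS i]
      simp only [hWdef]
      ring_nf
  rw [← sub_eq_zero, ← Finset.sum_sub_distrib]
  have : ∀ j ∈ Finset.range n, (-1 : K) ^ (j + 1) * LinearMap.trace K (C (j + 1)) ((a j) ∘ₗ (k j))
      - (-1 : K) ^ (j + 1) * LinearMap.trace K (C (j + 1)) ((a j) ∘ₗ (k' j))
      = W (j + 1) - W j := fun j _ => key j
  rw [Finset.sum_congr rfl this, Finset.sum_range_sub]
  -- W n = 0
  match n with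
  | 0 => simp [hWdef]
  | m + 1 =>
    have hd : (d (m + 1) : C (m + 1) →ₗ[K] C (m + 2)) = 0 := by
      ext x
      exact htop (m + 2) (by omega) _
    have hv0 : v m = 0 := by
      rw [hv]
      simp only []
      rw [hd]
      simp
    simp [hWdef, hv0]
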